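/- arXiv:1405.4006 — 4 statements merged into one kernel-verified Lean document; each statement's English description precedes it below -/
import Mathlib

section
/- Let C and D be nonempty nearly convex subsets of X such that ri C ∩ ri D ≠ ∅. Then C ∩ D is nearly convex. -/
open Set Pointwise

/-- A set is nearly convex if it is sandwiched between a convex set and its closure. -/
def NearlyConvex {X : Type*} [NormedAddCommGroup X] [NormedSpace ℝ X] (S : Set X) : Prop :=
  ∃ C : Set X, Convex ℝ C ∧ C ⊆ S ∧ S ⊆ closure C

/-- Two sets are nearly equal if they have the same closure and the same relative
(intrinsic) interior. -/
def NearEq {X : Type*} [NormedAddCommGroup X] [NormedSpace ℝ X] (C D : Set X) : Prop :=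
  closure C = closure D ∧ intrinsicInterior ℝ C = intrinsicInterior ℝ D

section Aux

variable {X : Type*} [NormedAddCommGroup X] [NormedSpace ℝ X] [FiniteDimensional ℝ X]

theorem aux_closure_subset_span (s : Set X) : closure s ⊆ (affineSpan ℝ s : Set X) :=
  (affineSpan ℝ s).closed_of_finiteDimensional.closure_subset_iff.2 (subset_affineSpan ℝ s)

/-- Metric characterization of the intrinsic interior. -/
theorem aux_mem_ri_iff {s : Set X} {x : X} :
    x ∈ intrinsicInterior ℝ s ↔ x ∈ (affineSpan ℝ s : Set X) ∧
      ∃ ε > 0, ∀ y ∈ (affineSpan ℝ s : Set X), dist y x < ε → y ∈ s := by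
  constructor
  · rintro ⟨y, hy, rfl⟩
    refine ⟨y.2, ?_⟩
    rw [mem_interior_iff_mem_nhds, Metric.mem_nhds_iff] at hy
    obtain ⟨ε, hε, h⟩ := hy
    refine ⟨ε, hε, fun z hz hd => ?_⟩
    exact h (show (⟨z, hz⟩ : affineSpan ℝ s) ∈ Metric.ball y ε by
      simpa [Metric.mem_ball, Subtype.dist_eq] using hd)
  · rintro ⟨hx, ε, hε, h⟩
    refine ⟨⟨x, hx⟩, ?_, rfl⟩
    rw [mem_interior_iff_mem_nhds, Metric.mem_nhds_iff]
    exact ⟨ε, hε, fun z hz => h (z : X) z.2 (by simpa [Subtype.dist_eq] using hz)⟩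

/-- The open segment from a relative interior point to a closure point stays in the
relative interior. -/
theorem aux_ri_segment {A : Set X} (hA : Convex ℝ A) {z x : X}
    (hz : z ∈ intrinsicInterior ℝ A) (hx : x ∈ closure A) :
    openSegment ℝ z x ⊆ intrinsicInterior ℝ A := by
  rintro p ⟨a, b, ha, hb, hab, rfl⟩
  rw [aux_mem_ri_iff] at hz ⊢
  obtain ⟨hzV, ε, hε, hball⟩ := hz
  have hxV : x ∈ (affineSpan ℝ A : Set X) := aux_closure_subset_span A hx
  have hpV : a • z + b • x ∈ (affineSpan ℝ A : Set X) :=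
    (affineSpan ℝ A).convex hzV hxV ha.le hb.le hab
  refine ⟨hpV, a * ε / 2, by positivity, fun y hyV hyd => ?_⟩
  -- choose x' ∈ A close to x
  obtain ⟨x', hx'A, hx'd⟩ := Metric.mem_closure_iff.1 hx (a * ε / 2 / b) (by positivity)
  have hx'V : x' ∈ (affineSpan ℝ A : Set X) := subset_affineSpan ℝ A hx'A
  set z' : X := (1 / a) • (y - x') + x' with hz'def
  have hz'V : z' ∈ (affineSpan ℝ A : Set X) := by
    have := (affineSpan ℝ A).smul_vsub_vadd_mem (1 / a) hyV hx'V hx'V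
    simpa [vsub_eq_sub, vadd_eq_add, hz'def] using this
  have hkey : z' - z = (1 / a) • ((y - (a • z + b • x)) + b • (x - x')) := by
    rw [hz'def]
    match_scalars <;> field_simp <;> linarith
  have hz'A : z' ∈ A := by
    refine hball z' hz'V ?_
    rw [dist_eq_norm, hkey, norm_smul]
    have h1 : ‖(y - (a • z + b • x)) + b • (x - x')‖ ≤
        ‖y - (a • z + b • x)‖ + b * ‖x - x'‖ := by
      calc ‖(y - (a • z + b • x)) + b • (x - x')‖
          ≤ ‖y - (a • z + b • x)‖ + ‖b • (x - x')‖ := norm_add_le _ _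
        _ = ‖y - (a • z + b • x)‖ + b * ‖x - x'‖ := by
            rw [norm_smul, Real.norm_of_nonneg hb.le]
    have h2 : ‖y - (a • z + b • x)‖ < a * ε / 2 := by
      rw [← dist_eq_norm]; exact hyd
    have h3 : b * ‖x - x'‖ < a * ε / 2 := by
      have : ‖x - x'‖ < a * ε / 2 / b := by rw [← dist_eq_norm]; exact hx'd
      calc b * ‖x - x'‖ < b * (a * ε / 2 / b) := by
            exact mul_lt_mul_of_pos_left this hb
        _ = a * ε / 2 := by field_simp
    have h4 : ‖(1 : ℝ) / a‖ = 1 / a := Real.norm_of_nonneg (by positivity)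
    rw [h4]
    calc 1 / a * ‖(y - (a • z + b • x)) + b • (x - x')‖
        ≤ 1 / a * (‖y - (a • z + b • x)‖ + b * ‖x - x'‖) := by
          exact mul_le_mul_of_nonneg_left h1 (by positivity)
      _ < 1 / a * (a * ε / 2 + a * ε / 2) := by
          apply mul_lt_mul_of_pos_left (by linarith) (by positivity)
      _ = ε := by field_simp; norm_num
  have hy_eq : y = a • z' + b • x' := by
    rw [hz'def]; match_scalars <;> field_simp <;> linarith
  rw [hy_eq]
  exact hA hz'A hx'A ha.le hb.le hab

theorem aux_span_closure (A : Set X) : affineSpan ℝ (closure A) = affineSpan ℝ A :=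
  le_antisymm (affineSpan_le.2 (aux_closure_subset_span A))
    (affineSpan_mono ℝ subset_closure)

theorem aux_ri_mono {s t : Set X} (hst : s ⊆ t)
    (hspan : (affineSpan ℝ s : Set X) = affineSpan ℝ t) :
    intrinsicInterior ℝ s ⊆ intrinsicInterior ℝ t := by
  intro x hx
  rw [aux_mem_ri_iff] at hx ⊢
  obtain ⟨hxV, ε, hε, h⟩ := hx
  exact ⟨hspan ▸ hxV, ε, hε, fun y hy hd => hst (h y (hspan ▸ hy) hd)⟩

/-- Rockafellar 6.3: `ri (cl A) ⊆ ri A` for convex nonempty `A`. -/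
theorem aux_ri_closure_subset {A : Set X} (hA : Convex ℝ A) (hAne : A.Nonempty) :
    intrinsicInterior ℝ (closure A) ⊆ intrinsicInterior ℝ A := by
  intro x hx
  obtain ⟨z, hz⟩ := hAne.intrinsicInterior hA
  rcases eq_or_ne x z with rfl | hne
  · exact hz
  rw [aux_mem_ri_iff] at hx
  obtain ⟨hxV, ε, hε, hball⟩ := hx
  have hVeq : (affineSpan ℝ (closure A) : Set X) = affineSpan ℝ A := by
    rw [aux_span_closure]
  have hzV : z ∈ (affineSpan ℝ (closure A) : Set X) := by
    rw [hVeq]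
    exact subset_affineSpan ℝ A (intrinsicInterior_subset hz)
  have hxz : (0 : ℝ) < ‖x - z‖ := by
    rw [norm_pos_iff, sub_ne_zero]; exact hne
  set c : ℝ := ε / (2 * ‖x - z‖) with hcdef
  have hc : 0 < c := by positivity
  set y : X := x + c • (x - z) with hydef
  have hyV : y ∈ (affineSpan ℝ (closure A) : Set X) := by
    have h := (affineSpan ℝ (closure A)).smul_vsub_vadd_mem c hxV hzV hxV
    have heq : y = c • (x -ᵥ z) +ᵥ x := by
      rw [hydef, vsub_eq_sub, vadd_eq_add]; abel
    rw [heq]; exact h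
  have hyA : y ∈ closure A := by
    refine hball y hyV ?_
    rw [hydef, dist_eq_norm]
    have : ‖x + c • (x - z) - x‖ = c * ‖x - z‖ := by
      rw [add_sub_cancel_left, norm_smul, Real.norm_of_nonneg hc.le]
    rw [this, hcdef]
    rw [div_mul_eq_mul_div]
    rw [div_lt_iff₀ (by positivity)]
    nlinarith
  have hxseg : x ∈ openSegment ℝ z y := by
    refine ⟨c / (1 + c), 1 / (1 + c), by positivity, by positivity, by field_simp; ring, ?_⟩
    rw [hydef]
    match_scalars <;> field_simp <;> ring
  exact aux_ri_segment hA hz hyA hxseg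

theorem aux_convex_ri {A : Set X} (hA : Convex ℝ A) :
    Convex ℝ (intrinsicInterior ℝ A) := by
  intro a ha b hb ta tb hta htb hab
  rcases hta.eq_or_lt with h0 | h0
  · have : tb = 1 := by linarith
    simp [← h0, this, hb]
  rcases htb.eq_or_lt with h1 | h1
  · have : ta = 1 := by linarith
    simp [← h1, this, ha]
  exact aux_ri_segment hA ha (subset_closure (intrinsicInterior_subset hb))
    ⟨ta, tb, h0, h1, hab, rfl⟩

end Aux

/-- If `C` and `D` are nonempty nearly convex subsets of a finite-dimensional real inner
product space with `ri C ∩ ri D ≠ ∅`, then `C ∩ D` is nearly convex. -/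
theorem inter_nearlyConvex {X : Type*} [NormedAddCommGroup X] [InnerProductSpace ℝ X]
    [FiniteDimensional ℝ X] (C D : Set X) (hCne : C.Nonempty) (hDne : D.Nonempty)
    (hC : NearlyConvex C) (hD : NearlyConvex D)
    (hri : (intrinsicInterior ℝ C ∩ intrinsicInterior ℝ D).Nonempty) :
    NearlyConvex (C ∩ D) := by
  obtain ⟨C₀, hC₀conv, hC₀sub, hCsub⟩ := hC
  obtain ⟨D₀, hD₀conv, hD₀sub, hDsub⟩ := hD
  obtain ⟨x, hxC, hxD⟩ := hri
  have hC₀ne : C₀.Nonempty := by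
    by_contra h
    rw [not_nonempty_iff_eq_empty] at h
    rcases hCne with ⟨c, hc⟩
    simpa [h] using hCsub hc
  have hD₀ne : D₀.Nonempty := by
    by_contra h
    rw [not_nonempty_iff_eq_empty] at h
    rcases hDne with ⟨d, hd⟩
    simpa [h] using hDsub hd
  -- spans agree
  have hspanC : affineSpan ℝ C = affineSpan ℝ C₀ :=
    le_antisymm (affineSpan_le.2 (hCsub.trans (aux_closure_subset_span C₀)))
      (affineSpan_mono ℝ hC₀sub)
  have hspanD : affineSpan ℝ D = affineSpan ℝ D₀ :=
    le_antisymm (affineSpan_le.2 (hDsub.trans (aux_closure_subset_span D₀)))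
      (affineSpan_mono ℝ hD₀sub)
  -- x is in the relative interiors of C₀ and D₀
  have hxC₀ : x ∈ intrinsicInterior ℝ C₀ := by
    refine aux_ri_closure_subset hC₀conv hC₀ne ?_
    refine aux_ri_mono hCsub ?_ hxC
    rw [aux_span_closure, hspanC]
  have hxD₀ : x ∈ intrinsicInterior ℝ D₀ := by
    refine aux_ri_closure_subset hD₀conv hD₀ne ?_
    refine aux_ri_mono hDsub ?_ hxD
    rw [aux_span_closure, hspanD]
  refine ⟨intrinsicInterior ℝ C₀ ∩ intrinsicInterior ℝ D₀,
    (aux_convex_ri hC₀conv).inter (aux_convex_ri hD₀conv),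
    inter_subset_inter (intrinsicInterior_subset.trans hC₀sub)
      (intrinsicInterior_subset.trans hD₀sub), ?_⟩
  rintro u ⟨huC, huD⟩
  have hseg : openSegment ℝ x u ⊆ intrinsicInterior ℝ C₀ ∩ intrinsicInterior ℝ D₀ :=
    subset_inter (aux_ri_segment hC₀conv hxC₀ (hCsub huC))
      (aux_ri_segment hD₀conv hxD₀ (hDsub huD))
  have : u ∈ segment ℝ x u := right_mem_segment ℝ x u
  rw [← closure_openSegment] at this
  exact closure_mono hseg this
end

section
/- Let C and D be nonempty nearly convex subsets of X such that ri C ∩ ri D ≠ ∅. Then cl(C ∩ D) = cl C ∩ cl D. -/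
open Set Pointwise

theorem aux_interior_closure {E : Type*} [NormedAddCommGroup E] [NormedSpace ℝ E]
    {s : Set E} (hs : Convex ℝ s) (hne : (interior s).Nonempty) :
    interior (closure s) ⊆ interior s := by
  obtain ⟨x₀, hx₀⟩ := hne
  intro y hy
  obtain ⟨r, hr, hball⟩ := Metric.mem_nhds_iff.1 (mem_interior_iff_mem_nhds.1 hy)
  set ε : ℝ := r / (2 * (‖y - x₀‖ + 1)) with hε_def
  have hnorm_pos : (0:ℝ) < ‖y - x₀‖ + 1 := by positivity
  have hε : 0 < ε := by positivity
  set z : E := y + ε • (y - x₀) with hz_def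
  have hz : z ∈ closure s := by
    apply hball
    have : dist z y = ε * ‖y - x₀‖ := by
      rw [hz_def, dist_eq_norm]
      simp [norm_smul, abs_of_pos hε]
    rw [Metric.mem_ball, this, hε_def]
    rw [div_mul_eq_mul_div, div_lt_iff₀ (by positivity)]
    nlinarith [norm_nonneg (y - x₀)]
  have h1ε : (1:ℝ) + ε ≠ 0 := by positivity
  have key : (ε / (1 + ε)) • x₀ + (1 / (1 + ε)) • z = y := by
    rw [hz_def]
    match_scalars <;> field_simp <;> ring
  have := hs.combo_interior_closure_mem_interior hx₀ hz
    (by positivity : (0:ℝ) < ε / (1 + ε)) (by positivity : (0:ℝ) ≤ 1 / (1 + ε))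
    (by field_simp; ring)
  rwa [key] at this

theorem aux_closure_preimage {X : Type*} [TopologicalSpace X] {A : Set X}
    {s : Set X} (hs : s ⊆ A) :
    closure ((Subtype.val) ⁻¹' s : Set A) = Subtype.val ⁻¹' closure s := by
  rw [Topology.IsEmbedding.subtypeVal.closure_eq_preimage_closure_image,
    Subtype.image_preimage_val, inter_eq_right.2 hs]

/-- The key "line segment principle" for nearly convex sets: the open segment from a point of
the intrinsic interior to a point of the closure lies inside the set. -/
theorem aux_openSegment_subset {X : Type*} [NormedAddCommGroup X] [NormedSpace ℝ X]
    [FiniteDimensional ℝ X] {S : Set X} (hS : NearlyConvex S) {z y : X}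
    (hz : z ∈ intrinsicInterior ℝ S) (hy : y ∈ closure S) :
    openSegment ℝ z y ⊆ S := by
  obtain ⟨C₀, hC₀conv, hC₀S, hScl⟩ := hS
  set A := affineSpan ℝ S with hA_def
  have hAclosed : IsClosed (A : Set X) := A.closed_of_finiteDimensional
  have hSA : S ⊆ (A : Set X) := subset_affineSpan ℝ S
  have hC₀A : C₀ ⊆ (A : Set X) := hC₀S.trans hSA
  have hclSA : closure S ⊆ (A : Set X) := closure_minimal hSA hAclosed
  obtain ⟨z', hz', hz'eq⟩ := mem_intrinsicInterior.1 hz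
  haveI : Nonempty A := ⟨z'⟩
  let e : A ≃ᵃⁱ[ℝ] A.direction := AffineIsometryEquiv.constVSub ℝ z'
  let f : A.direction →ᵃ[ℝ] X := A.subtype.comp e.symm.toAffineEquiv.toAffineMap
  have hfpre : ∀ t : Set X, f ⁻¹' t = e.symm.toHomeomorph ⁻¹' (Subtype.val ⁻¹' t) :=
    fun _ => rfl
  have hcl : ∀ t : Set X, t ⊆ (A : Set X) →
      closure ((Subtype.val) ⁻¹' t : Set A) = Subtype.val ⁻¹' closure t :=
    fun t ht => aux_closure_preimage ht
  set Sw := f ⁻¹' S with hSw_def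
  set Cw := f ⁻¹' C₀ with hCw_def
  have hCwconv : Convex ℝ Cw := hC₀conv.affine_preimage f
  have hCwSw : Cw ⊆ Sw := preimage_mono hC₀S
  have hclCw : closure Cw = f ⁻¹' closure C₀ := by
    rw [hCw_def, hfpre, hfpre, ← Homeomorph.preimage_closure, hcl C₀ hC₀A]
  have hclSw : closure Sw = f ⁻¹' closure S := by
    rw [hSw_def, hfpre, hfpre, ← Homeomorph.preimage_closure, hcl S hSA]
  have hSwcl : Sw ⊆ closure Cw := by rw [hclCw]; exact preimage_mono hScl
  have hclSwCw : closure Sw ⊆ closure Cw := by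
    rw [← closure_closure (s := Cw)]; exact closure_mono hSwcl
  -- `0` corresponds to `z`
  have he0 : e.symm 0 = z' := by
    have h1 : e z' = z' -ᵥ z' := rfl
    have : e z' = 0 := by rw [h1, vsub_self]
    rw [← this, e.symm_apply_apply]
  have hz0 : (0 : A.direction) ∈ interior Sw := by
    rw [hSw_def, hfpre, ← Homeomorph.preimage_interior]
    show e.symm.toHomeomorph 0 ∈ interior ((Subtype.val) ⁻¹' S : Set A)
    simpa [he0] using hz'
  -- `e y'` corresponds to `y`
  have hyA : y ∈ A := hclSA hy
  have hwy : e ⟨y, hyA⟩ ∈ closure Sw := by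
    rw [hclSw]
    show f (e ⟨y, hyA⟩) ∈ closure S
    have : f (e ⟨y, hyA⟩) = ((e.symm (e ⟨y, hyA⟩) : A) : X) := rfl
    rw [this, e.symm_apply_apply]
    exact hy
  -- interior of Cw is nonempty
  have h2 : (interior (closure Cw)).Nonempty := ⟨0, interior_mono hSwcl hz0⟩
  have hspan_top : affineSpan ℝ (closure Cw) = ⊤ :=
    ((hCwconv.closure).interior_nonempty_iff_affineSpan_eq_top).1 h2
  have hspanCw : affineSpan ℝ Cw = ⊤ := by
    refine le_antisymm le_top ?_
    rw [← hspan_top]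
    exact affineSpan_le.2 (closure_minimal (subset_affineSpan ℝ Cw)
      (affineSpan ℝ Cw).closed_of_finiteDimensional)
  have hintCw : (interior Cw).Nonempty :=
    (hCwconv.interior_nonempty_iff_affineSpan_eq_top).2 hspanCw
  have h0int : (0 : A.direction) ∈ interior Cw :=
    aux_interior_closure hCwconv hintCw (interior_mono hSwcl hz0)
  have hseg : openSegment ℝ (0 : A.direction) (e ⟨y, hyA⟩) ⊆ Cw :=
    (hCwconv.openSegment_interior_closure_subset_interior h0int (hclSwCw hwy)).trans
      interior_subset
  -- transport back
  have hf0 : f 0 = z := by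
    show ((e.symm 0 : A) : X) = z
    rw [he0, hz'eq]
  have hfy : f (e ⟨y, hyA⟩) = y := by
    show ((e.symm (e ⟨y, hyA⟩) : A) : X) = y
    rw [e.symm_apply_apply]
  have himg : openSegment ℝ z y = f '' openSegment ℝ (0 : A.direction) (e ⟨y, hyA⟩) := by
    rw [image_openSegment, hf0, hfy]
  rw [himg]
  refine (image_mono hseg).trans ?_
  rw [hCw_def]
  exact (image_preimage_subset f C₀).trans hC₀S

/-- If `C` and `D` are nonempty nearly convex subsets of a finite-dimensional real inner
product space with `ri C ∩ ri D ≠ ∅`, then `cl (C ∩ D) = cl C ∩ cl D`. -/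
theorem closure_inter {X : Type*} [NormedAddCommGroup X] [InnerProductSpace ℝ X]
    [FiniteDimensional ℝ X] (C D : Set X) (hCne : C.Nonempty) (hDne : D.Nonempty)
    (hC : NearlyConvex C) (hD : NearlyConvex D)
    (hri : (intrinsicInterior ℝ C ∩ intrinsicInterior ℝ D).Nonempty) :
    closure (C ∩ D) = closure C ∩ closure D := by
  refine Subset.antisymm
    (subset_inter (closure_mono inter_subset_left) (closure_mono inter_subset_right)) ?_
  rintro y ⟨hyC, hyD⟩
  obtain ⟨z, hzC, hzD⟩ := hri
  have hsub : openSegment ℝ z y ⊆ C ∩ D :=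
    subset_inter (aux_openSegment_subset hC hzC hyC) (aux_openSegment_subset hD hzD hyD)
  have hymem : y ∈ closure (openSegment ℝ z y) := by
    rw [closure_openSegment]
    exact right_mem_segment ℝ z y
  exact closure_mono hsub hymem
end

section
/- Let C₁ and C₂ be nearly convex subsets of X and let D₁ and D₂ be subsets of X such that C₁ ≃ D₁, C₂ ≃ D₂, and ri C₁ ∩ ri C₂ ≠ ∅. Then C₁ ∩ C₂ ≃ D₁ ∩ D₂. -/
open Set Pointwise

section Aux

variable {X : Type*} [NormedAddCommGroup X] [NormedSpace ℝ X] [FiniteDimensional ℝ X]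

/-- Ambient characterization of the intrinsic (relative) interior. -/
theorem NearEqAux.mem_ri_iff {s : Set X} {x : X} :
    x ∈ intrinsicInterior ℝ s ↔ x ∈ (affineSpan ℝ s : Set X) ∧
      ∃ ε > 0, Metric.ball x ε ∩ (affineSpan ℝ s : Set X) ⊆ s := by
  rw [mem_intrinsicInterior]
  constructor
  · rintro ⟨y, hy, rfl⟩
    refine ⟨y.2, ?_⟩
    rw [mem_interior_iff_mem_nhds, Metric.mem_nhds_iff] at hy
    obtain ⟨ε, hε, hb⟩ := hy
    refine ⟨ε, hε, fun w ⟨hw1, hw2⟩ => ?_⟩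
    have : (⟨w, hw2⟩ : affineSpan ℝ s) ∈ Metric.ball y ε := by
      simpa [Metric.mem_ball, Subtype.dist_eq] using hw1
    exact hb this
  · rintro ⟨hx, ε, hε, hb⟩
    refine ⟨⟨x, hx⟩, ?_, rfl⟩
    rw [mem_interior_iff_mem_nhds, Metric.mem_nhds_iff]
    refine ⟨ε, hε, fun z hz => ?_⟩
    exact hb ⟨by simpa [Metric.mem_ball, Subtype.dist_eq] using hz, z.2⟩

namespace NearEqAux

theorem closure_subset_span (s : Set X) : closure s ⊆ (affineSpan ℝ s : Set X) :=
  closure_minimal (subset_affineSpan _ _) (affineSpan ℝ s).closed_of_finiteDimensional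

theorem span_eq_of_sandwich {s t : Set X} (hst : s ⊆ t) (hts : t ⊆ closure s) :
    affineSpan ℝ s = affineSpan ℝ t := by
  apply le_antisymm (affineSpan_mono ℝ hst)
  rw [affineSpan_le]
  exact hts.trans (closure_subset_span s)

theorem ri_mono_of_span_eq {s t : Set X} (hst : s ⊆ t)
    (h : affineSpan ℝ s = affineSpan ℝ t) :
    intrinsicInterior ℝ s ⊆ intrinsicInterior ℝ t := by
  intro x hx
  rw [mem_ri_iff] at hx ⊢
  rw [← h]
  obtain ⟨hx1, ε, hε, hb⟩ := hx
  exact ⟨hx1, ε, hε, fun w hw => hst (hb hw)⟩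

theorem lineMap_mem_span {s : Set X} {x y : X} (hx : x ∈ (affineSpan ℝ s : Set X))
    (hy : y ∈ (affineSpan ℝ s : Set X)) (t : ℝ) :
    (1 - t) • x + t • y ∈ (affineSpan ℝ s : Set X) := by
  have h := (affineSpan ℝ s).smul_vsub_vadd_mem t hy hx hx
  have he : (1 - t) • x + t • y = t • (y -ᵥ x) +ᵥ x := by
    simp only [vsub_eq_sub, vadd_eq_add]; module
  rw [he]; exact h

/-- Segment lemma: moving from a relative interior point towards a closure point,
any point strictly before the endpoint stays in the relative interior. -/
theorem segment_mem_ri {C : Set X} (hC : Convex ℝ C) {x y : X} {t : ℝ}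
    (hx : x ∈ intrinsicInterior ℝ C) (hy : y ∈ closure C) (ht0 : 0 ≤ t) (ht1 : t < 1) :
    (1 - t) • x + t • y ∈ intrinsicInterior ℝ C := by
  rw [mem_ri_iff] at hx ⊢
  obtain ⟨hxs, ε, hε, hb⟩ := hx
  have hys : y ∈ (affineSpan ℝ C : Set X) := closure_subset_span C hy
  have h1t : (0:ℝ) < 1 - t := by linarith
  set z := (1 - t) • x + t • y with hz
  refine ⟨lineMap_mem_span hxs hys t, (1 - t) * ε / 2,
    by positivity, fun w ⟨hw1, hw2⟩ => ?_⟩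
  set δ := (1 - t) * ε / 2 with hδ
  have hδ0 : 0 < δ := by positivity
  obtain ⟨y', hy'C, hy'⟩ := Metric.mem_closure_iff.1 hy δ hδ0
  have hy's : y' ∈ (affineSpan ℝ C : Set X) := subset_affineSpan ℝ C hy'C
  set x' := (1 - t)⁻¹ • (w - t • y') with hx'
  have hx's : x' ∈ (affineSpan ℝ C : Set X) := by
    have h := (affineSpan ℝ C).smul_vsub_vadd_mem ((1 - t)⁻¹) hw2 hy's hy's
    have he : x' = (1 - t)⁻¹ • (w -ᵥ y') +ᵥ y' := by
      simp only [vsub_eq_sub, vadd_eq_add, hx']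
      match_scalars <;> (field_simp; try ring)
    rw [he]; exact h
  have hx'ball : x' ∈ Metric.ball x ε := by
    have hdiff : x' - x = (1 - t)⁻¹ • ((w - z) - t • (y' - y)) := by
      rw [hx', hz]
      match_scalars <;> (field_simp; try ring)
    rw [Metric.mem_ball, dist_eq_norm, hdiff]
    have h1 : ‖w - z‖ < δ := by
      rw [← dist_eq_norm]; exact hw1
    have h2 : ‖t • (y' - y)‖ ≤ δ := by
      rw [norm_smul, Real.norm_of_nonneg ht0]
      have : ‖y' - y‖ < δ := by rw [← dist_eq_norm]; rw [dist_comm] at hy'; exact hy'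
      nlinarith [norm_nonneg (y' - y)]
    have : ‖(w - z) - t • (y' - y)‖ < 2 * δ := by
      calc ‖(w - z) - t • (y' - y)‖ ≤ ‖w - z‖ + ‖t • (y' - y)‖ := norm_sub_le _ _
        _ < 2 * δ := by linarith
    rw [norm_smul, Real.norm_of_nonneg (le_of_lt (inv_pos.2 h1t))]
    have hδε : (1 - t)⁻¹ * (2 * δ) = ε := by rw [hδ]; field_simp
    calc (1 - t)⁻¹ * ‖(w - z) - t • (y' - y)‖ < (1 - t)⁻¹ * (2 * δ) :=
          mul_lt_mul_of_pos_left this (inv_pos.2 h1t)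
      _ = ε := hδε
  have hx'C : x' ∈ C := hb ⟨hx'ball, hx's⟩
  have : w = (1 - t) • x' + t • y' := by
    rw [hx', smul_inv_smul₀ h1t.ne']; abel
  rw [this]
  exact hC hx'C hy'C (le_of_lt h1t) ht0 (by ring)

/-- For a convex set, the relative interior of the closure is the relative interior. -/
theorem ri_closure_subset {C : Set X} (hC : Convex ℝ C) :
    intrinsicInterior ℝ (closure C) ⊆ intrinsicInterior ℝ C := by
  obtain rfl | hne := C.eq_empty_or_nonempty
  · simp
  obtain ⟨y, hy⟩ := hne.intrinsicInterior hC
  intro x hx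
  by_cases hxy : x = y
  · rwa [hxy]
  have hspan : affineSpan ℝ (closure C) = affineSpan ℝ C :=
    (span_eq_of_sandwich subset_closure subset_rfl).symm
  rw [mem_ri_iff, hspan] at hx
  obtain ⟨hxs, ε, hε, hb⟩ := hx
  have hys : y ∈ (affineSpan ℝ C : Set X) := subset_affineSpan ℝ C (intrinsicInterior_subset hy)
  set r := ‖x - y‖ with hr
  have hr0 : 0 < r := norm_sub_pos_iff.2 hxy
  set t := min (1/2 : ℝ) (ε / (2 * r)) with ht
  have ht0 : 0 < t := lt_min (by norm_num) (by positivity)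
  have htr : t * r < ε := by
    have h1 : t ≤ ε / (2 * r) := min_le_right _ _
    have : t * r ≤ ε / 2 := by
      calc t * r ≤ (ε / (2 * r)) * r := by nlinarith
        _ = ε / 2 := by field_simp
    linarith
  set z := x + t • (x - y) with hz
  have hzspan : z ∈ (affineSpan ℝ C : Set X) := by
    have := lineMap_mem_span hxs hys (-t)
    have he : (1 - (-t)) • x + (-t) • y = z := by rw [hz]; module
    rwa [he] at this
  have hzball : z ∈ Metric.ball x ε := by
    rw [Metric.mem_ball, dist_eq_norm, hz]
    have : x + t • (x - y) - x = t • (x - y) := by abel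
    rw [this, norm_smul, Real.norm_of_nonneg ht0.le]
    exact htr
  have hzC : z ∈ closure C := hb ⟨hzball, hzspan⟩
  have h1t : (0:ℝ) < 1 + t := by linarith
  have key := segment_mem_ri hC hy hzC (by positivity : (0:ℝ) ≤ (1 + t)⁻¹)
    (by rw [inv_lt_one_iff₀]; right; linarith)
  have he : (1 - (1 + t)⁻¹) • y + (1 + t)⁻¹ • z = x := by
    rw [hz]; match_scalars <;> (field_simp; try ring)
  rwa [he] at key

theorem convex_ri {C : Set X} (hC : Convex ℝ C) : Convex ℝ (intrinsicInterior ℝ C) := by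
  intro x hx y hy a b ha hb hab
  by_cases hb1 : b = 1
  · have ha0 : a = 0 := by linarith
    simpa [ha0, hb1] using hy
  · have hblt : b < 1 := lt_of_le_of_ne (by linarith) hb1
    have := segment_mem_ri hC hx (subset_closure (intrinsicInterior_subset hy)) hb hblt
    rwa [show (1:ℝ) - b = a by linarith] at this

/-- Sandwich lemma: a set squeezed between a convex set and its closure is nearly
equal to it. -/
theorem sandwich {E S : Set X} (hE : Convex ℝ E) (hES : E ⊆ S) (hSE : S ⊆ closure E) :
    closure S = closure E ∧ intrinsicInterior ℝ S = intrinsicInterior ℝ E := by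
  have hspan : affineSpan ℝ E = affineSpan ℝ S := span_eq_of_sandwich hES hSE
  have hspan' : affineSpan ℝ E = affineSpan ℝ (closure E) :=
    span_eq_of_sandwich subset_closure subset_rfl
  have hclo : closure S = closure E :=
    le_antisymm (closure_minimal hSE isClosed_closure) (closure_mono hES)
  refine ⟨hclo, le_antisymm ?_ (ri_mono_of_span_eq hES hspan)⟩
  exact (ri_mono_of_span_eq hSE (hspan.symm.trans hspan')).trans (ri_closure_subset hE)

end NearEqAux

end Aux

/-- If `C₁, C₂` are nearly convex, `C₁ ≃ D₁`, `C₂ ≃ D₂`, and `ri C₁ ∩ ri C₂ ≠ ∅`,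
then `C₁ ∩ C₂ ≃ D₁ ∩ D₂`. -/
theorem nearEq_inter {X : Type*} [NormedAddCommGroup X] [InnerProductSpace ℝ X]
    [FiniteDimensional ℝ X] (C₁ C₂ D₁ D₂ : Set X)
    (hC₁ : NearlyConvex C₁) (hC₂ : NearlyConvex C₂)
    (h₁ : NearEq C₁ D₁) (h₂ : NearEq C₂ D₂)
    (hri : (intrinsicInterior ℝ C₁ ∩ intrinsicInterior ℝ C₂).Nonempty) :
    NearEq (C₁ ∩ C₂) (D₁ ∩ D₂) := by
  open NearEqAux in
  obtain ⟨A, hA, hAC, hCA⟩ := hC₁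
  obtain ⟨B, hB, hBC, hCB⟩ := hC₂
  obtain ⟨swc₁, swr₁⟩ := NearEqAux.sandwich hA hAC hCA
  obtain ⟨swc₂, swr₂⟩ := NearEqAux.sandwich hB hBC hCB
  set E := intrinsicInterior ℝ A ∩ intrinsicInterior ℝ B with hEdef
  obtain ⟨x, hx₁, hx₂⟩ := hri
  rw [swr₁] at hx₁
  rw [swr₂] at hx₂
  have hEconv : Convex ℝ E := (NearEqAux.convex_ri hA).inter (NearEqAux.convex_ri hB)
  -- closure A ∩ closure B ⊆ closure E
  have claim : closure A ∩ closure B ⊆ closure E := by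
    rintro y ⟨hyA, hyB⟩
    rw [Metric.mem_closure_iff]
    intro ε hε
    set r := dist y x with hrdef
    set s := min 1 (ε / (2 * (r + 1))) with hs
    have hr0 : 0 ≤ r := dist_nonneg
    have hs0 : 0 < s := lt_min one_pos (by positivity)
    have hs1 : s ≤ 1 := min_le_left _ _
    have ht0 : (0:ℝ) ≤ 1 - s := by linarith
    have ht1 : 1 - s < 1 := by linarith
    refine ⟨(1 - (1 - s)) • x + (1 - s) • y,
      ⟨NearEqAux.segment_mem_ri hA hx₁ hyA ht0 ht1,
       NearEqAux.segment_mem_ri hB hx₂ hyB ht0 ht1⟩, ?_⟩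
    have hdy : y - ((1 - (1 - s)) • x + (1 - s) • y) = s • (y - x) := by module
    rw [dist_eq_norm, hdy, norm_smul, Real.norm_of_nonneg hs0.le]
    have hnr : ‖y - x‖ = r := by rw [hrdef, dist_eq_norm]
    rw [hnr]
    have hsr : s ≤ ε / (2 * (r + 1)) := min_le_right _ _
    have h2r : 0 < 2 * (r + 1) := by linarith
    have : s * r ≤ ε / (2 * (r + 1)) * r := by nlinarith
    have h3 : ε / (2 * (r + 1)) * r < ε := by
      rw [div_mul_eq_mul_div, div_lt_iff₀ h2r]
      nlinarith
    linarith
  have hclE : closure E = closure A ∩ closure B := by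
    apply le_antisymm _ claim
    apply subset_inter
    · exact closure_mono (fun z hz => intrinsicInterior_subset hz.1)
    · exact closure_mono (fun z hz => intrinsicInterior_subset hz.2)
  -- E sandwiches C₁ ∩ C₂
  have hE₁ : E ⊆ C₁ ∩ C₂ := fun z hz =>
    ⟨hAC (intrinsicInterior_subset hz.1), hBC (intrinsicInterior_subset hz.2)⟩
  have hC12 : C₁ ∩ C₂ ⊆ closure E := by
    rw [hclE]; exact fun z hz => ⟨hCA hz.1, hCB hz.2⟩
  -- E sandwiches D₁ ∩ D₂
  have hriD₁ : intrinsicInterior ℝ A ⊆ D₁ := by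
    rw [← swr₁, h₁.2]; exact intrinsicInterior_subset
  have hriD₂ : intrinsicInterior ℝ B ⊆ D₂ := by
    rw [← swr₂, h₂.2]; exact intrinsicInterior_subset
  have hE₂ : E ⊆ D₁ ∩ D₂ := fun z hz => ⟨hriD₁ hz.1, hriD₂ hz.2⟩
  have hclD₁ : closure D₁ = closure A := h₁.1.symm.trans swc₁
  have hclD₂ : closure D₂ = closure B := h₂.1.symm.trans swc₂
  have hD12 : D₁ ∩ D₂ ⊆ closure E := by
    rw [hclE]
    exact fun z hz => ⟨hclD₁ ▸ subset_closure hz.1, hclD₂ ▸ subset_closure hz.2⟩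
  obtain ⟨e1, e2⟩ := NearEqAux.sandwich hEconv hE₁ hC12
  obtain ⟨f1, f2⟩ := NearEqAux.sandwich hEconv hE₂ hD12
  exact ⟨e1.trans f1.symm, e2.trans f2.symm⟩
end

section
/- Let A : X ⇒ X and B : X ⇒ X be maximally monotone operators. If there exists C ∈ {A, B} such that ran C = X and C is 3* monotone, then ran(Id − T_{(A,B)}) ≃ dom A − dom B. -/
open Set Pointwise

/-- Domain of a set-valued operator. -/
def svDom {X : Type*} (A : X → Set X) : Set X := {x | (A x).Nonempty}

/-- Range of a set-valued operator. -/
def svRan {X : Type*} (A : X → Set X) : Set X := ⋃ x, A x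

/-- Monotonicity of a set-valued operator. -/
def IsMonotoneOp {X : Type*} [NormedAddCommGroup X] [InnerProductSpace ℝ X]
    (A : X → Set X) : Prop :=
  ∀ ⦃x u y v : X⦄, u ∈ A x → v ∈ A y → 0 ≤ (inner ℝ (x - y) (u - v) : ℝ)

/-- Maximal monotonicity of a set-valued operator. -/
def IsMaxMonotoneOp {X : Type*} [NormedAddCommGroup X] [InnerProductSpace ℝ X]
    (A : X → Set X) : Prop :=
  IsMonotoneOp A ∧
    ∀ x u : X, (∀ y v : X, v ∈ A y → 0 ≤ (inner ℝ (x - y) (u - v) : ℝ)) → u ∈ A x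

/-- `A` is 3* monotone (rectangular): for every `x ∈ dom A` and `v ∈ ran A`, the set
`{⟪x - z, v - w⟫ : (z,w) ∈ gra A}` is bounded below. -/
def Is3StarMonotoneOp {X : Type*} [NormedAddCommGroup X] [InnerProductSpace ℝ X]
    (A : X → Set X) : Prop :=
  ∀ x ∈ svDom A, ∀ v ∈ svRan A,
    BddBelow {r : ℝ | ∃ z w : X, w ∈ A z ∧ r = (inner ℝ (x - z) (v - w) : ℝ)}

/-- `J` is the resolvent of `A`: the single-valued, everywhere-defined map with
`x - J x ∈ A (J x)` for all `x`. -/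
def IsResolventOf {X : Type*} [NormedAddCommGroup X] (J : X → X) (A : X → Set X) : Prop :=
  ∀ x : X, x - J x ∈ A (J x)

/-- The Douglas–Rachford operator `T = Id - J_A + J_B ∘ (2 J_A - Id)` built from
the resolvents `J_A` and `J_B`. -/
noncomputable def drT {X : Type*} [NormedAddCommGroup X] [NormedSpace ℝ X]
    (JA JB : X → X) : X → X :=
  fun x => x - JA x + JB ((2 : ℝ) • JA x - x)


open Filter

local notation "⟪" x ", " y "⟫" => @inner ℝ _ _ x y

section Aux

variable {X : Type*} [NormedAddCommGroup X] [InnerProductSpace ℝ X]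

lemma mem_intrinsicInterior_iff' {s : Set X} {x : X} :
    x ∈ intrinsicInterior ℝ s ↔
      x ∈ s ∧ ∃ ε > 0, ∀ y ∈ (affineSpan ℝ s : Set X), dist y x < ε → y ∈ s := by
  constructor
  · intro h
    obtain ⟨y, hy, rfl⟩ := mem_intrinsicInterior.1 h
    refine ⟨interior_subset (s := Subtype.val ⁻¹' s) hy, ?_⟩
    obtain ⟨ε, hε, hb⟩ := Metric.isOpen_iff.1 isOpen_interior y hy
    refine ⟨ε, hε, fun z hz hdz => ?_⟩
    have hzb : (⟨z, hz⟩ : affineSpan ℝ s) ∈ Metric.ball y ε := by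
      rw [Metric.mem_ball, Subtype.dist_eq]; exact hdz
    exact interior_subset (s := Subtype.val ⁻¹' s) (hb hzb)
  · rintro ⟨hxs, ε, hε, hb⟩
    refine mem_intrinsicInterior.2 ⟨⟨x, subset_affineSpan ℝ s hxs⟩, ?_, rfl⟩
    refine mem_interior.2 ⟨Metric.ball _ ε, ?_, Metric.isOpen_ball, Metric.mem_ball_self hε⟩
    rintro ⟨z, hzsp⟩ hzball
    rw [Metric.mem_ball, Subtype.dist_eq] at hzball
    exact hb z hzsp hzball

lemma nearEq_sandwich [FiniteDimensional ℝ X] {E D : Set X}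
    (h1 : E ⊆ D) (h2 : D ⊆ closure E)
    (h3 : intrinsicInterior ℝ (closure E) ⊆ E) : NearEq E D := by
  have hclE : closure E ⊆ (affineSpan ℝ E : Set X) :=
    closure_minimal (subset_affineSpan ℝ E) (affineSpan ℝ E).closed_of_finiteDimensional
  have hcl : closure E = closure D :=
    subset_antisymm (closure_mono h1) (closure_minimal h2 isClosed_closure)
  have hDspan : (affineSpan ℝ D : Set X) = (affineSpan ℝ E : Set X) := by
    rw [le_antisymm (affineSpan_le.2 (h2.trans hclE)) (affineSpan_mono ℝ h1)]
  have hKspan : (affineSpan ℝ (closure E) : Set X) = (affineSpan ℝ E : Set X) := by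
    rw [le_antisymm (affineSpan_le.2 hclE) (affineSpan_mono ℝ subset_closure)]
  refine ⟨hcl, ?_⟩
  ext x
  simp only [mem_intrinsicInterior_iff']
  constructor
  · rintro ⟨hxE, ε, hε, hb⟩
    refine ⟨h1 hxE, ε, hε, fun y hy hdy => h1 (hb y ?_ hdy)⟩
    rw [hDspan] at hy; exact hy
  · rintro ⟨hxD, ε, hε, hb⟩
    have hbE : ∀ y ∈ (affineSpan ℝ E : Set X), dist y x < ε → y ∈ E := by
      intro y hy hdy
      apply h3
      rw [mem_intrinsicInterior_iff']
      refine ⟨h2 (hb y (by rw [hDspan]; exact hy) hdy), ε - dist y x, by linarith, ?_⟩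
      intro z hz hdz
      refine h2 (hb z ?_ ?_)
      · rw [hDspan]; rw [hKspan] at hz; exact hz
      · have := dist_triangle z y x; linarith
    have hxspan : x ∈ (affineSpan ℝ E : Set X) := by
      rw [← hDspan]; exact subset_affineSpan ℝ D hxD
    exact ⟨hbE x hxspan (by simpa using hε), ε, hε, hbE⟩

lemma resolvent_fne {A : X → Set X} (hA : IsMonotoneOp A) {J : X → X}
    (hJ : IsResolventOf J A) (x y : X) :
    ‖J x - J y‖ ^ 2 ≤ ⟪x - y, J x - J y⟫ := by
  have h := hA (hJ x) (hJ y)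
  rw [← real_inner_self_eq_norm_sq]
  simp only [inner_sub_left, inner_sub_right] at h ⊢
  linarith [real_inner_comm (J x) x, real_inner_comm (J y) x, real_inner_comm (J x) y,
    real_inner_comm (J y) y, real_inner_comm (J x) (J y)]

lemma G_fne {A B : X → Set X} (hA : IsMonotoneOp A) (hB : IsMonotoneOp B)
    {JA JB : X → X} (hJA : IsResolventOf JA A) (hJB : IsResolventOf JB B) (x x' : X) :
    ‖(JA x - JB ((2:ℝ) • JA x - x)) - (JA x' - JB ((2:ℝ) • JA x' - x'))‖ ^ 2 ≤
      ⟪x - x', (JA x - JB ((2:ℝ) • JA x - x)) - (JA x' - JB ((2:ℝ) • JA x' - x'))⟫ := by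
  set p := JA x - JA x' with hp
  set q := JB ((2:ℝ) • JA x - x) - JB ((2:ℝ) • JA x' - x') with hq
  set d := x - x' with hd
  have h1 : ‖p‖ ^ 2 ≤ ⟪d, p⟫ := resolvent_fne hA hJA x x'
  have h2 : ‖q‖ ^ 2 ≤ ⟪((2:ℝ) • JA x - x) - ((2:ℝ) • JA x' - x'), q⟫ :=
    resolvent_fne hB hJB _ _
  have hss : ((2:ℝ) • JA x - x) - ((2:ℝ) • JA x' - x') = (2:ℝ) • p - d := by
    rw [hp, hd, smul_sub]; abel
  rw [hss] at h2
  have hgoal : (JA x - JB ((2:ℝ) • JA x - x)) - (JA x' - JB ((2:ℝ) • JA x' - x'))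
      = p - q := by rw [hp, hq]; abel
  rw [hgoal]
  rw [norm_sub_sq_real]
  simp only [inner_sub_left, inner_sub_right, real_inner_smul_left] at h2 ⊢
  linarith

lemma exists_perturbed [FiniteDimensional ℝ X] {G : X → X}
    (hmono : ∀ x y : X, 0 ≤ ⟪x - y, G x - G y⟫)
    (hlip : ∀ x y : X, ‖G x - G y‖ ≤ ‖x - y‖)
    {ε : ℝ} (hε : 0 < ε) (v : X) : ∃ x : X, ε • x + G x = v := by
  haveI : CompleteSpace X := FiniteDimensional.complete ℝ X
  set θ : ℝ := ε / (1 + ε) ^ 2 with hθdef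
  have h1ε : (0:ℝ) < (1 + ε) ^ 2 := by positivity
  have hθpos : 0 < θ := div_pos hε h1ε
  set c2 : ℝ := 1 - ε ^ 2 / (1 + ε) ^ 2 with hc2def
  have hc2nonneg : 0 ≤ c2 := by
    rw [hc2def, sub_nonneg, div_le_one h1ε]; nlinarith
  have hc2lt : c2 < 1 := by
    rw [hc2def]
    have : 0 < ε ^ 2 / (1 + ε) ^ 2 := by positivity
    linarith
  set k := Real.sqrt c2 with hk
  have hknn : 0 ≤ k := Real.sqrt_nonneg _
  set Φ : X → X := fun x => x - θ • (ε • x + G x - v) with hΦdef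
  have hΦ : ∀ x y, dist (Φ x) (Φ y) ≤ k * dist x y := by
    intro x y
    have hdiff : Φ x - Φ y = (x - y) - θ • (ε • (x - y) + (G x - G y)) := by
      rw [hΦdef]; simp only [smul_sub, smul_add]; abel
    rw [dist_eq_norm, dist_eq_norm, hdiff]
    set d := x - y with hdd
    set g := G x - G y with hgg
    have e1 : ‖d - θ • (ε • d + g)‖ ^ 2
        = ‖d‖ ^ 2 - 2 * θ * (ε * ‖d‖ ^ 2 + ⟪d, g⟫) + θ ^ 2 * ‖ε • d + g‖ ^ 2 := by
      rw [norm_sub_sq_real, norm_smul, real_inner_smul_right, inner_add_right,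
        real_inner_smul_right, real_inner_self_eq_norm_sq]
      rw [Real.norm_eq_abs, abs_of_pos hθpos]
      ring
    have e2 : ‖ε • d + g‖ ≤ (1 + ε) * ‖d‖ := by
      calc ‖ε • d + g‖ ≤ ‖ε • d‖ + ‖g‖ := norm_add_le _ _
        _ ≤ ε * ‖d‖ + ‖d‖ := by
            rw [norm_smul, Real.norm_eq_abs, abs_of_pos hε]
            exact add_le_add le_rfl (hlip x y)
        _ = (1 + ε) * ‖d‖ := by ring
    have e3 : ‖ε • d + g‖ ^ 2 ≤ (1 + ε) ^ 2 * ‖d‖ ^ 2 := by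
      nlinarith [norm_nonneg (ε • d + g), norm_nonneg d]
    have e4 := hmono x y
    have e5 : ‖d - θ • (ε • d + g)‖ ^ 2 ≤ c2 * ‖d‖ ^ 2 := by
      rw [e1]
      have hθval : 1 - 2 * θ * ε + θ ^ 2 * (1 + ε) ^ 2 = c2 := by
        rw [hθdef, hc2def]; field_simp; ring
      nlinarith [sq_nonneg θ, norm_nonneg d]
    have e6 : ‖d - θ • (ε • d + g)‖ ≤ k * ‖d‖ := by
      have := Real.sqrt_le_sqrt e5
      rw [Real.sqrt_sq (norm_nonneg _)] at this
      calc ‖d - θ • (ε • d + g)‖ ≤ Real.sqrt (c2 * ‖d‖ ^ 2) := this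
        _ = k * ‖d‖ := by
            rw [Real.sqrt_mul hc2nonneg, Real.sqrt_sq (norm_nonneg _)]
    exact e6
  have hk1 : k < 1 := by
    nlinarith [Real.sq_sqrt hc2nonneg, Real.sqrt_nonneg c2]
  have hcon : ContractingWith (Real.toNNReal k) Φ := by
    constructor
    · simpa [← NNReal.coe_lt_coe, Real.coe_toNNReal k hknn] using hk1
    · refine LipschitzWith.of_dist_le_mul fun x y => ?_
      rw [Real.coe_toNNReal k hknn]
      exact hΦ x y
  set x := ContractingWith.fixedPoint Φ hcon with hxdef
  have hfix : Φ x = x := hcon.fixedPoint_isFixedPt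
  have hz : θ • (ε • x + G x - v) = 0 := by
    have : x - θ • (ε • x + G x - v) = x := hfix
    exact sub_eq_self.mp this
  rcases smul_eq_zero.1 hz with h | h
  · exact absurd h (ne_of_gt hθpos)
  · exact ⟨x, by rwa [sub_eq_zero] at h⟩

lemma ri_cl_range_subset [FiniteDimensional ℝ X] (G : X → X)
    (hfne : ∀ x y : X, ‖G x - G y‖ ^ 2 ≤ ⟪x - y, G x - G y⟫) :
    intrinsicInterior ℝ (closure (Set.range G)) ⊆ Set.range G := by
  classical
  intro x0 hx0
  set S := Set.range G with hSdef
  -- monotonicity of the graph {(G w, w - G w)}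
  have hmonoG : ∀ w w' : X, 0 ≤ ⟪G w - G w', (w - G w) - (w' - G w')⟫ := by
    intro w w'
    have h := hfne w w'
    have e : ⟪G w - G w', (w - G w) - (w' - G w')⟫
        = ⟪w - w', G w - G w'⟫ - ‖G w - G w'‖ ^ 2 := by
      rw [← real_inner_self_eq_norm_sq]
      simp only [inner_sub_left, inner_sub_right]
      linarith [real_inner_comm (G w) w, real_inner_comm (G w') w,
        real_inner_comm (G w) w', real_inner_comm (G w') w',
        real_inner_comm (G w) (G w')]
    rw [e]; linarith
  -- maximality-style property
  have hmax : ∀ x p : X, (∀ w : X, 0 ≤ ⟪x - G w, p - (w - G w)⟫) → x = G (x + p) := by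
    intro x p h
    have h1 := h (x + p)
    have e : p - ((x + p) - G (x + p)) = -(x - G (x + p)) := by abel
    rw [e, inner_neg_right] at h1
    have h2 : ⟪x - G (x + p), x - G (x + p)⟫ ≤ 0 := by linarith
    rw [real_inner_self_eq_norm_sq] at h2
    have h3 : ‖x - G (x + p)‖ = 0 := by nlinarith [norm_nonneg (x - G (x + p))]
    have h4 := norm_eq_zero.1 h3
    have : x = G (x + p) := by
      have := sub_eq_zero.1 h4; exact this
    exact this
  -- span facts
  have hclS : closure S ⊆ (affineSpan ℝ S : Set X) :=
    closure_minimal (subset_affineSpan ℝ S) (affineSpan ℝ S).closed_of_finiteDimensional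
  have hsp : affineSpan ℝ (closure S) = affineSpan ℝ S :=
    le_antisymm (affineSpan_le.2 hclS) (affineSpan_mono ℝ subset_closure)
  obtain ⟨hx0K, ε, hε, hball⟩ := mem_intrinsicInterior_iff'.1 hx0
  -- a sequence in S converging to x0
  obtain ⟨xs, hxsS, hxs⟩ := mem_closure_iff_seq_limit.1 hx0K
  choose w hw using fun n => hxsS n
  set V := (affineSpan ℝ S).direction with hVdef
  haveI : CompleteSpace V := FiniteDimensional.complete ℝ V
  set u : ℕ → X := fun n => w n - xs n with hudef
  set p : ℕ → X := fun n => (V.orthogonalProjectionOnto (u n) : X) with hpdef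
  set r : ℕ → ℝ := fun n => 1 / (1 + ‖p n‖) with hrdef
  set q : ℕ → X := fun n => r n • p n with hqdef
  have hrpos : ∀ n, 0 < r n := by
    intro n; rw [hrdef]
    exact one_div_pos.2 (by positivity)
  have hrle : ∀ n, r n ≤ 1 := by
    intro n; rw [hrdef]
    rw [div_le_one (by positivity)]
    linarith [norm_nonneg (p n)]
  have hqnorm : ∀ n, ‖q n‖ = 1 - r n := by
    intro n
    rw [hqdef]
    simp only
    rw [norm_smul, Real.norm_eq_abs, abs_of_pos (hrpos n), hrdef]
    simp only
    have h0 : (0:ℝ) < 1 + ‖p n‖ := by positivity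
    field_simp
    ring
  have hqball : ∀ n, q n ∈ Metric.closedBall (0 : X) 1 := by
    intro n
    rw [Metric.mem_closedBall, dist_zero_right, hqnorm n]
    linarith [(hrpos n).le]
  have hcomp : IsCompact ((Set.Icc (0:ℝ) 1) ×ˢ Metric.closedBall (0:X) 1) :=
    isCompact_Icc.prod (isCompact_closedBall _ _)
  have hmem : ∀ n, ((r n, q n) : ℝ × X) ∈ (Set.Icc (0:ℝ) 1) ×ˢ Metric.closedBall (0:X) 1 :=
    fun n => ⟨⟨(hrpos n).le, hrle n⟩, hqball n⟩
  obtain ⟨⟨rl, ql⟩, hmemK, φ, hφ, hconv⟩ := hcomp.tendsto_subseq hmem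
  have hr : Tendsto (fun n => r (φ n)) atTop (nhds rl) :=
    (continuous_fst.tendsto _).comp hconv
  have hq : Tendsto (fun n => q (φ n)) atTop (nhds ql) :=
    (continuous_snd.tendsto _).comp hconv
  have hxsφ : Tendsto (fun n => xs (φ n)) atTop (nhds x0) := hxs.comp hφ.tendsto_atTop
  -- membership of differences in V
  have hSspan : S ⊆ (affineSpan ℝ S : Set X) := subset_affineSpan ℝ S
  have hx0span : x0 ∈ (affineSpan ℝ S : Set X) := hclS hx0K
  have hdiffV : ∀ z : X, z ∈ S → ∀ z' : X, z' ∈ (affineSpan ℝ S : Set X) → z' - z ∈ V := by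
    intro z hz z' hz'
    have := AffineSubspace.vsub_mem_direction hz' (hSspan hz)
    simpa [vsub_eq_sub] using this
  -- projection property
  have hproj : ∀ d : X, d ∈ V → ∀ c : X, ⟪d, (V.orthogonalProjectionOnto c : X)⟫ = ⟪d, c⟫ := by
    intro d hd c
    have h0 := V.starProjection_inner_eq_zero c d hd
    have h1 : ⟪d, c - (V.orthogonalProjectionOnto c : X)⟫ = 0 := by
      rw [real_inner_comm]; exact h0
    rw [inner_sub_right] at h1
    linarith
  have hpV : ∀ n, p n ∈ V := fun n => SetLike.coe_mem _
  have hqV : ∀ n, q n ∈ V := fun n => Submodule.smul_mem _ _ (hpV n)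
  -- the key limiting inequality
  have hkey : ∀ w' : X,
      0 ≤ ⟪x0 - G w', ql - rl • (V.orthogonalProjectionOnto (w' - G w') : X)⟫ := by
    intro w'
    have hn : ∀ n, 0 ≤ ⟪xs (φ n) - G w',
        q (φ n) - r (φ n) • (V.orthogonalProjectionOnto (w' - G w') : X)⟫ := by
      intro n
      set m := φ n
      have hbase : 0 ≤ ⟪xs m - G w', u m - (w' - G w')⟫ := by
        have := hmonoG (w m) w'
        rw [hw m] at this
        exact this
      have hdm : xs m - G w' ∈ V := by
        apply hdiffV (G w') ⟨w', rfl⟩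
        exact hSspan (hxsS m)
      have e1 : ⟪xs m - G w', p m⟫ = ⟪xs m - G w', u m⟫ := hproj _ hdm _
      have e2 : ⟪xs m - G w', (V.orthogonalProjectionOnto (w' - G w') : X)⟫
          = ⟪xs m - G w', w' - G w'⟫ := hproj _ hdm _
      have e3 : ⟪xs m - G w', q m - r m • (V.orthogonalProjectionOnto (w' - G w') : X)⟫
          = r m * ⟪xs m - G w', u m - (w' - G w')⟫ := by
        rw [hqdef]
        simp only
        rw [← smul_sub, real_inner_smul_right, inner_sub_right, inner_sub_right, e1, e2]
      rw [e3]
      exact mul_nonneg (hrpos m).le hbase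
    have hlim : Tendsto (fun n => ⟪xs (φ n) - G w',
        q (φ n) - r (φ n) • (V.orthogonalProjectionOnto (w' - G w') : X)⟫) atTop
        (nhds ⟪x0 - G w', ql - rl • (V.orthogonalProjectionOnto (w' - G w') : X)⟫) := by
      apply Filter.Tendsto.inner
      · exact hxsφ.sub tendsto_const_nhds
      · exact hq.sub (hr.smul tendsto_const_nhds)
    exact ge_of_tendsto hlim (Filter.Eventually.of_forall hn)
  have hqlV : ql ∈ V := by
    have hcl : IsClosed (V : Set X) := Submodule.closed_of_finiteDimensional V
    exact hcl.mem_of_tendsto hq (Filter.Eventually.of_forall fun n => hqV (φ n))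
  have hrl0 : 0 ≤ rl := hmemK.1.1
  rcases eq_or_lt_of_le hrl0 with hrl | hrl
  · -- rl = 0 : contradiction
    exfalso
    have hql1 : ‖ql‖ = 1 := by
      have h1 : Tendsto (fun n => ‖q (φ n)‖) atTop (nhds ‖ql‖) := hq.norm
      have h2 : Tendsto (fun n => ‖q (φ n)‖) atTop (nhds 1) := by
        have : (fun n => ‖q (φ n)‖) = fun n => 1 - r (φ n) := by
          funext n; exact hqnorm (φ n)
        rw [this]
        have h3 := (tendsto_const_nhds (x := (1:ℝ))).sub hr
        rw [← hrl] at h3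
        simpa using h3
      exact tendsto_nhds_unique h1 h2
    -- ∀ z ∈ closure S, 0 ≤ ⟪x0 - z, ql⟫
    have hineqS : ∀ z : X, z ∈ S → 0 ≤ ⟪x0 - z, ql⟫ := by
      rintro z ⟨w', rfl⟩
      have := hkey w'
      rw [← hrl] at this
      simpa using this
    have hineqcl : ∀ z : X, z ∈ closure S → 0 ≤ ⟪x0 - z, ql⟫ := by
      intro z hz
      obtain ⟨zs, hzsS, hzs⟩ := mem_closure_iff_seq_limit.1 hz
      have hlim : Tendsto (fun n => ⟪x0 - zs n, ql⟫) atTop (nhds ⟪x0 - z, ql⟫) :=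
        Filter.Tendsto.inner (tendsto_const_nhds.sub hzs) tendsto_const_nhds
      exact ge_of_tendsto hlim (Filter.Eventually.of_forall fun n => hineqS _ (hzsS n))
    set z' := (ε / 2) • ql + x0 with hz'def
    have hz'span : z' ∈ (affineSpan ℝ (closure S) : Set X) := by
      have hdir : (ε / 2) • ql ∈ (affineSpan ℝ (closure S)).direction := by
        rw [hsp]; exact Submodule.smul_mem _ _ hqlV
      have hx0m : x0 ∈ affineSpan ℝ (closure S) := subset_affineSpan ℝ _ hx0K
      have := AffineSubspace.vadd_mem_of_mem_direction hdir hx0m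
      simpa [vadd_eq_add] using this
    have hz'cl : z' ∈ closure S := by
      apply hball z' hz'span
      rw [hz'def]
      have : (ε / 2) • ql + x0 - x0 = (ε / 2) • ql := by abel
      rw [dist_eq_norm, this, norm_smul, Real.norm_eq_abs, abs_of_pos (by linarith), hql1]
      linarith
    have := hineqcl z' hz'cl
    rw [hz'def] at this
    have e : x0 - ((ε / 2) • ql + x0) = -((ε / 2) • ql) := by abel
    rw [e, inner_neg_left, real_inner_smul_left, real_inner_self_eq_norm_sq, hql1] at this
    nlinarith
  · -- rl > 0 : x0 ∈ range G
    set pl := rl⁻¹ • ql with hpldef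
    have hfinal : ∀ w' : X, 0 ≤ ⟪x0 - G w', pl - (w' - G w')⟫ := by
      intro w'
      have h1 := hkey w'
      have hd : x0 - G w' ∈ V := hdiffV (G w') ⟨w', rfl⟩ x0 hx0span
      have e2 : ⟪x0 - G w', (V.orthogonalProjectionOnto (w' - G w') : X)⟫
          = ⟪x0 - G w', w' - G w'⟫ := hproj _ hd _
      have hrlne : rl ≠ 0 := ne_of_gt hrl
      have e3 : ⟪x0 - G w', ql - rl • (V.orthogonalProjectionOnto (w' - G w') : X)⟫
          = rl * ⟪x0 - G w', pl - (w' - G w')⟫ := by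
        rw [hpldef]
        simp only [inner_sub_right, real_inner_smul_right, e2]
        field_simp
      rw [e3] at h1
      nlinarith [h1, hrl]
    exact ⟨x0 + pl, (hmax x0 pl hfinal).symm⟩


set_option maxHeartbeats 2000000 in
lemma dom_sub_subset_closure [FiniteDimensional ℝ X] {A B : X → Set X}
    (hA : IsMaxMonotoneOp A) (hB : IsMaxMonotoneOp B)
    (hC : (svRan A = Set.univ ∧ Is3StarMonotoneOp A) ∨
      (svRan B = Set.univ ∧ Is3StarMonotoneOp B))
    {JA JB : X → X} (hJA : IsResolventOf JA A) (hJB : IsResolventOf JB B) :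
    svDom A - svDom B ⊆ closure (Set.range fun x => JA x - JB ((2:ℝ) • JA x - x)) := by
  intro v hv
  obtain ⟨ybar, hybar, zbar, hzbar, hvyz⟩ := Set.mem_sub.1 hv
  obtain ⟨abar, habar⟩ := hybar
  obtain ⟨bbar, hbbar⟩ := hzbar
  set G : X → X := fun x => JA x - JB ((2:ℝ) • JA x - x) with hGdef
  have hGfne : ∀ x y : X, ‖G x - G y‖ ^ 2 ≤ ⟪x - y, G x - G y⟫ := fun x y =>
    G_fne hA.1 hB.1 hJA hJB x y
  have hGmono : ∀ x y : X, 0 ≤ ⟪x - y, G x - G y⟫ := fun x y =>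
    le_trans (sq_nonneg _) (hGfne x y)
  have hGlip : ∀ x y : X, ‖G x - G y‖ ≤ ‖x - y‖ := by
    intro x y
    have h := hGfne x y
    have h2 := real_inner_le_norm (x - y) (G x - G y)
    nlinarith [norm_nonneg (G x - G y), norm_nonneg (x - y)]
  set C0 : ℝ := ‖v - G 0‖ with hC0def
  -- uniform bound on ε * ‖x‖²  for solutions of ε x + G x = v
  have main : ∃ Cs : ℝ, 0 ≤ Cs ∧
      ∀ ε : ℝ, 0 < ε → ∀ x : X, ε • x + G x = v → ε * ‖x‖ ^ 2 ≤ Cs := by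
    have normu_le : ∀ ε : ℝ, 0 < ε → ∀ x : X, ε • x + G x = v →
        ε * ‖x‖ ^ 2 = ⟪x, ε • x⟫ ∧ ‖ε • x‖ ≤ C0 := by
      intro ε hε x hxeq
      have htu : ⟪x, ε • x⟫ = ε * ‖x‖ ^ 2 := by
        rw [real_inner_smul_right, real_inner_self_eq_norm_sq]
      constructor
      · exact htu.symm
      · have hu2 : ε • x = v - G x := by rw [← hxeq]; abel
        have hm := hGmono x 0
        have e : ⟪x, v - G x⟫ = ⟪x, v - G 0⟫ - ⟪x - 0, G x - G 0⟫ := by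
          simp only [sub_zero, inner_sub_right]
          ring
        have hb : ε * ‖x‖ ^ 2 ≤ ‖x‖ * C0 := by
          rw [← htu, hu2, e]
          have := real_inner_le_norm x (v - G 0)
          rw [hC0def]
          linarith
        rw [hu2] at hxeq ⊢
        rw [← hu2, norm_smul, Real.norm_eq_abs, abs_of_pos hε]
        rcases eq_or_lt_of_le (norm_nonneg x) with hx0 | hx0
        · rw [← hx0, mul_zero]
          rw [hC0def]; positivity
        · nlinarith
    rcases hC with ⟨hranA, h3A⟩ | ⟨hranB, h3B⟩
    · -- A is 3* with full range
      have hvb : v - bbar ∈ svRan A := by rw [hranA]; trivial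
      obtain ⟨c, hc⟩ := h3A ybar ⟨abar, habar⟩ (v - bbar) hvb
      refine ⟨max 0 (-c + ‖ybar + v - bbar‖ * C0), le_max_left _ _, ?_⟩
      intro ε hε x hxeq
      obtain ⟨htu, hnu⟩ := normu_le ε hε x hxeq
      set u : X := ε • x with hudef
      set y : X := JA x with hydef
      set z : X := JB ((2:ℝ) • y - x) with hzdef
      have ha : x - y ∈ A y := hJA x
      have hbz : ((2:ℝ) • y - x) - z ∈ B z := hJB _
      have huGx : u + (y - z) = v := hxeq
      have hzz : z = u + y - v := by rw [← huGx]; abel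
      have hbb2 : ((2:ℝ) • y - x) - z = v - u - (x - y) := by
        rw [hzz, two_smul]; abel
      have hzbv : zbar = ybar - v := by rw [← hvyz]; abel
      have hbeta := hB.1 hbz hbbar
      have hsigma : c ≤ ⟪ybar - y, v - bbar - (x - y)⟫ := hc ⟨y, x - y, ha, rfl⟩
      rw [hbb2, hzz, hzbv] at hbeta
      have key : ⟪(u + y - v) - (ybar - v), (v - u - (x - y)) - bbar⟫
          + ⟪ybar - y, v - bbar - (x - y)⟫
          = ⟪ybar + v - bbar, u⟫ - ‖u‖ ^ 2 - ⟪x, u⟫ := by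
        rw [← real_inner_self_eq_norm_sq]
        simp only [inner_sub_left, inner_sub_right, inner_add_left, inner_add_right]
        linarith [real_inner_comm x y, real_inner_comm x ybar, real_inner_comm x v,
          real_inner_comm x u, real_inner_comm x bbar, real_inner_comm y ybar,
          real_inner_comm y v, real_inner_comm y u, real_inner_comm y bbar,
          real_inner_comm ybar v, real_inner_comm ybar u, real_inner_comm ybar bbar,
          real_inner_comm v u, real_inner_comm v bbar, real_inner_comm u bbar]
      have h2b : ⟪ybar + v - bbar, u⟫ ≤ ‖ybar + v - bbar‖ * C0 := by
        calc ⟪ybar + v - bbar, u⟫ ≤ ‖ybar + v - bbar‖ * ‖u‖ := real_inner_le_norm _ _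
          _ ≤ ‖ybar + v - bbar‖ * C0 := mul_le_mul_of_nonneg_left hnu (norm_nonneg _)
      have hfin : ⟪x, u⟫ ≤ -c + ‖ybar + v - bbar‖ * C0 := by
        nlinarith [hbeta, hsigma, key, h2b, sq_nonneg ‖u‖]
      calc ε * ‖x‖ ^ 2 = ⟪x, u⟫ := htu
        _ ≤ -c + ‖ybar + v - bbar‖ * C0 := hfin
        _ ≤ max 0 (-c + ‖ybar + v - bbar‖ * C0) := le_max_right _ _
    · -- B is 3* with full range
      have hva : v - abar ∈ svRan B := by rw [hranB]; trivial
      obtain ⟨c, hc⟩ := h3B zbar ⟨bbar, hbbar⟩ (v - abar) hva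
      refine ⟨max 0 (-c + ‖zbar + v + abar‖ * C0), le_max_left _ _, ?_⟩
      intro ε hε x hxeq
      obtain ⟨htu, hnu⟩ := normu_le ε hε x hxeq
      set u : X := ε • x with hudef
      set y : X := JA x with hydef
      set z : X := JB ((2:ℝ) • y - x) with hzdef
      have ha : x - y ∈ A y := hJA x
      have hbz : ((2:ℝ) • y - x) - z ∈ B z := hJB _
      have huGx : u + (y - z) = v := hxeq
      have hy2 : y = z + v - u := by rw [← huGx]; abel
      have hybar2 : ybar = zbar + v := by rw [← hvyz]; abel
      have halpha := hA.1 ha habar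
      have hsigma : c ≤ ⟪zbar - z, v - abar - (((2:ℝ) • y - x) - z)⟫ :=
        hc ⟨z, ((2:ℝ) • y - x) - z, hbz, rfl⟩
      rw [hy2, hybar2] at halpha
      rw [hy2] at hsigma
      have key : ⟪(z + v - u) - (zbar + v), (x - (z + v - u)) - abar⟫
          + ⟪zbar - z, v - abar - (((2:ℝ) • (z + v - u) - x) - z)⟫
          = ⟪zbar + v + abar, u⟫ - ‖u‖ ^ 2 - ⟪x, u⟫ := by
        rw [← real_inner_self_eq_norm_sq]
        simp only [smul_sub, smul_add, inner_sub_left, inner_sub_right, inner_add_left,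
          inner_add_right, real_inner_smul_left, real_inner_smul_right]
        linarith [real_inner_comm x z, real_inner_comm x zbar, real_inner_comm x v,
          real_inner_comm x u, real_inner_comm x abar, real_inner_comm z zbar,
          real_inner_comm z v, real_inner_comm z u, real_inner_comm z abar,
          real_inner_comm zbar v, real_inner_comm zbar u, real_inner_comm zbar abar,
          real_inner_comm v u, real_inner_comm v abar, real_inner_comm u abar]
      have h2b : ⟪zbar + v + abar, u⟫ ≤ ‖zbar + v + abar‖ * C0 := by
        calc ⟪zbar + v + abar, u⟫ ≤ ‖zbar + v + abar‖ * ‖u‖ := real_inner_le_norm _ _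
          _ ≤ ‖zbar + v + abar‖ * C0 := mul_le_mul_of_nonneg_left hnu (norm_nonneg _)
      have hfin : ⟪x, u⟫ ≤ -c + ‖zbar + v + abar‖ * C0 := by
        nlinarith [halpha, hsigma, key, h2b, sq_nonneg ‖u‖]
      calc ε * ‖x‖ ^ 2 = ⟪x, u⟫ := htu
        _ ≤ -c + ‖zbar + v + abar‖ * C0 := hfin
        _ ≤ max 0 (-c + ‖zbar + v + abar‖ * C0) := le_max_right _ _
  obtain ⟨Cs, hCs0, hmain⟩ := main
  rw [Metric.mem_closure_iff]
  intro delta hdelta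
  set ε : ℝ := delta ^ 2 / (2 * (Cs + 1)) with hedef
  have hεpos : 0 < ε := by
    rw [hedef]; positivity
  obtain ⟨x, hxeq⟩ := exists_perturbed hGmono hGlip hεpos v
  refine ⟨G x, ⟨x, rfl⟩, ?_⟩
  have h1 : v - G x = ε • x := by rw [← hxeq]; abel
  have hb := hmain ε hεpos x hxeq
  have h2 : ‖ε • x‖ ^ 2 = ε * (ε * ‖x‖ ^ 2) := by
    rw [norm_smul, Real.norm_eq_abs, abs_of_pos hεpos]; ring
  have h3 : ε * (ε * ‖x‖ ^ 2) ≤ ε * Cs := mul_le_mul_of_nonneg_left hb hεpos.le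
  have hd2 : (0:ℝ) < delta ^ 2 := by positivity
  have h4 : ε * Cs < delta ^ 2 := by
    rw [hedef, div_mul_eq_mul_div, div_lt_iff₀ (by positivity : (0:ℝ) < 2 * (Cs + 1))]
    nlinarith
  rw [dist_eq_norm, h1]
  have h5 : ‖ε • x‖ ^ 2 < delta ^ 2 := by rw [h2]; linarith
  nlinarith [norm_nonneg (ε • x)]


end Aux

/-- If one of the maximally monotone operators `A, B` is 3* monotone with full range,
then `ran (Id - T_{(A,B)}) ≃ dom A - dom B`. -/
theorem ran_id_sub_drT_nearEq_dom_sub {X : Type*} [NormedAddCommGroup X]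
    [InnerProductSpace ℝ X] [FiniteDimensional ℝ X] (A B : X → Set X)
    (hA : IsMaxMonotoneOp A) (hB : IsMaxMonotoneOp B)
    (hC : (svRan A = Set.univ ∧ Is3StarMonotoneOp A) ∨
      (svRan B = Set.univ ∧ Is3StarMonotoneOp B))
    (JA JB : X → X) (hJA : IsResolventOf JA A) (hJB : IsResolventOf JB B) :
    NearEq (Set.range fun x => x - drT JA JB x) (svDom A - svDom B) := by
  have hfun : (fun x : X => x - drT JA JB x) = fun x => JA x - JB ((2:ℝ) • JA x - x) := by
    funext x; simp only [drT]; abel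
  rw [hfun]
  apply nearEq_sandwich
  · rintro _ ⟨x, rfl⟩
    exact Set.mem_sub.2 ⟨JA x, ⟨x - JA x, hJA x⟩, JB ((2:ℝ) • JA x - x),
      ⟨((2:ℝ) • JA x - x) - JB ((2:ℝ) • JA x - x), hJB _⟩, rfl⟩
  · exact dom_sub_subset_closure hA hB hC hJA hJB
  · exact ri_cl_range_subset _ (fun x y => G_fne hA.1 hB.1 hJA hJB x y)
end
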